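/- Let 0 < q < 1. For complex z with Re z > 0, Γ(z+1;q) = ∏_{n=1}^{∞} ( [n+1]/[n] )^z ( [z+n]/[n] )^{-1}, where [w] := (1-q^w)/(1-q) and Γ(z+1;q) := (1-q)^{-z} ∏_{n=1}^{∞} (1-q^n)/(1-q^{z+n}). -/

import Mathlib

open Filter Topology

/-- The q-number `[w] = (1-q^w)/(1-q)`. -/
noncomputable def qnum (q : ℝ) (w : ℂ) : ℂ := (1 - (q : ℂ) ^ w) / (1 - (q : ℂ))

/-- The q-gamma function: `qGammaF q z = Γ(z+1; q) = (1-q)^{-z} ∏_{n≥1} (1-q^n)/(1-q^{z+n})`. -/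
noncomputable def qGammaF (q : ℝ) (z : ℂ) : ℂ :=
  (1 - (q : ℂ)) ^ (-z) * ∏' n : ℕ, (1 - (q : ℂ) ^ (n + 1)) / (1 - (q : ℂ) ^ (z + n + 1))

theorem stmt12 (q : ℝ) (hq : 0 < q) (hq1 : q < 1) (z : ℂ) (hz : 0 < z.re) :
    qGammaF q z
      = ∏' n : ℕ, ((qnum q ((n : ℂ) + 2) / qnum q ((n : ℂ) + 1)) ^ z *
          (qnum q (z + n + 1) / qnum q ((n : ℂ) + 1))⁻¹) := by
  -- basic real facts
  have hq0 : (0:ℝ) ≤ q := hq.le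
  have hqpow : ∀ m : ℕ, q ^ (m + 1) < 1 := fun m => pow_lt_one₀ hq0 hq1 (Nat.succ_ne_zero m)
  set r : ℕ → ℝ := fun n => 1 - q ^ (n + 1) with hr_def
  have hr : ∀ n, 0 < r n := fun n => sub_pos.2 (hqpow n)
  have hr1 : ∀ n, r n ≤ 1 := fun n => by
    simp only [hr_def]; nlinarith [pow_pos hq (n+1)]
  have hrne : ∀ n, r n ≠ 0 := fun n => (hr n).ne'
  have h1q : (0:ℝ) < 1 - q := sub_pos.2 hq1
  -- nonvanishing of 1 - q^w for re w > 0
  have habs : ∀ w : ℂ, ‖(q:ℂ) ^ w‖ = q ^ w.re :=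
    fun w => Complex.norm_cpow_eq_rpow_re_of_pos hq w
  have hne : ∀ w : ℂ, 0 < w.re → 1 - (q:ℂ) ^ w ≠ 0 := by
    intro w hw h
    have h2 : (q:ℂ) ^ w = 1 := by linear_combination -h
    have := habs w
    rw [h2] at this
    simp only [norm_one] at this
    have : q ^ w.re < 1 := Real.rpow_lt_one hq0 hq1 hw
    rw [← ‹(1:ℝ) = q ^ w.re›] at this
    exact lt_irrefl _ this
  have hQ1 : (1:ℂ) - (q:ℂ) ≠ 0 := by
    intro h
    have : (q:ℂ) = 1 := by linear_combination -h
    have : q = 1 := by exact_mod_cast this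
    linarith
  -- cast helper : complex nat powers of q are real
  have hnez : ∀ m : ℕ, (1:ℂ) - (q:ℂ) ^ (m+1) ≠ 0 := by
    intro m h
    have : ((1 - q ^ (m+1) : ℝ) : ℂ) = 0 := by push_cast; linear_combination h
    exact hrne m (by exact_mod_cast this)
  have hzre : ∀ n : ℕ, 0 < (z + (n:ℂ) + 1).re := by
    intro n
    simp only [Complex.add_re, Complex.natCast_re, Complex.one_re]
    positivity
  have hnez' : ∀ n : ℕ, 1 - (q:ℂ) ^ (z + (n:ℂ) + 1) ≠ 0 := fun n => hne _ (hzre n)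
  -- the two factor sequences
  set f : ℕ → ℂ := fun n => (((r (n+1) / r n : ℝ)) : ℂ) ^ z with hf_def
  set g : ℕ → ℂ := fun n => (1 - (q:ℂ) ^ (n + 1)) / (1 - (q:ℂ) ^ (z + (n:ℂ) + 1)) with hg_def
  -- Step 1: termwise identification
  have key : ∀ n : ℕ, (qnum q ((n : ℂ) + 2) / qnum q ((n : ℂ) + 1)) ^ z *
          (qnum q (z + n + 1) / qnum q ((n : ℂ) + 1))⁻¹ = f n * g n := by
    intro n
    have e1 : ((n:ℂ) + 2) = ((n + 2 : ℕ) : ℂ) := by push_cast; ring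
    have e2 : ((n:ℂ) + 1) = ((n + 1 : ℕ) : ℂ) := by push_cast; ring
    have hb : qnum q ((n:ℂ) + 2) / qnum q ((n:ℂ) + 1) = (((r (n+1) / r n : ℝ)) : ℂ) := by
      unfold qnum
      rw [e1, e2, Complex.cpow_natCast, Complex.cpow_natCast]
      have h1 := hnez (n+1)
      have h2 := hnez n
      simp only [hr_def]
      push_cast
      field_simp
    have hc : (qnum q (z + n + 1) / qnum q ((n : ℂ) + 1))⁻¹ = g n := by
      unfold qnum
      rw [e2, Complex.cpow_natCast]
      have h2 := hnez n
      have h3 := hnez' n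
      simp only [hg_def]
      field_simp
    rw [hb, hc]
  -- Step 2: telescoping HasProd for f
  have hA : HasProd f ((1 - (q:ℂ)) ^ (-z)) := by
    set d : ℕ → ℝ := fun n => Real.log (r (n+1)) - Real.log (r n) with hd_def
    have hdnn : ∀ n, 0 ≤ d n := by
      intro n
      have : r n ≤ r (n+1) := by
        simp only [hr_def]
        have : q ^ (n+1+1) ≤ q ^ (n+1) := pow_le_pow_of_le_one hq0 hq1.le (by omega)
        linarith
      simp only [hd_def]
      have := Real.log_le_log (hr n) this
      linarith
    have hsum_range : ∀ N, ∑ i ∈ Finset.range N, d i = Real.log (r N) - Real.log (r 0) := by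
      intro N
      exact Finset.sum_range_sub (fun n => Real.log (r n)) N
    have hdsummable : Summable d := by
      apply summable_of_sum_range_le (c := -Real.log (r 0)) hdnn
      intro N
      rw [hsum_range]
      have : Real.log (r N) ≤ 0 := Real.log_nonpos (hr N).le (hr1 N)
      linarith
    have htends : Tendsto (fun N => ∑ i ∈ Finset.range N, d i) atTop
        (𝓝 (-Real.log (1 - q))) := by
      simp only [hsum_range]
      have h1 : Tendsto (fun N : ℕ => r N) atTop (𝓝 1) := by
        have : Tendsto (fun N : ℕ => q ^ (N + 1)) atTop (𝓝 0) :=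
          (tendsto_pow_atTop_nhds_zero_of_lt_one hq0 hq1).comp (tendsto_add_atTop_nat 1)
        have := this.const_sub 1
        simpa using this
      have h2 : Tendsto (fun N : ℕ => Real.log (r N)) atTop (𝓝 0) := by
        have := (Real.continuousAt_log one_ne_zero).tendsto.comp h1
        simpa [Function.comp_def] using this
      rw [show r 0 = 1 - q from by simp [hr_def]]
      have h3 := h2.sub (tendsto_const_nhds (x := Real.log (1 - q)) (f := atTop))
      rw [zero_sub] at h3
      exact h3
    have hdhs : HasSum d (-Real.log (1 - q)) := by
      have := hdsummable.hasSum
      rwa [tendsto_nhds_unique this.tendsto_sum_nat htends] at this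
    have hcs : HasSum (fun n => ((d n : ℝ) : ℂ) * z)
        (((-Real.log (1 - q) : ℝ) : ℂ) * z) :=
      (Complex.hasSum_ofReal.2 hdhs).mul_right z
    have hprod := hcs.cexp
    have hval : Complex.exp (((-Real.log (1 - q) : ℝ) : ℂ) * z) = (1 - (q:ℂ)) ^ (-z) := by
      rw [Complex.cpow_def_of_ne_zero hQ1]
      congr 1
      have h1 : (1:ℂ) - (q:ℂ) = ((1 - q : ℝ) : ℂ) := by push_cast; ring
      rw [h1, ← Complex.ofReal_log h1q.le]
      push_cast
      ring
    rw [hval] at hprod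
    have hfe : f = Complex.exp ∘ (fun n => ((d n : ℝ) : ℂ) * z) := by
      funext n
      simp only [Function.comp, hf_def, hd_def]
      have hx : (0:ℝ) < r (n+1) / r n := div_pos (hr (n+1)) (hr n)
      have hxne : ((r (n+1) / r n : ℝ) : ℂ) ≠ 0 := by exact_mod_cast hx.ne'
      rw [Complex.cpow_def_of_ne_zero hxne, ← Complex.ofReal_log hx.le,
        Real.log_div (hrne (n+1)) (hrne n)]
    rw [hfe]
    exact hprod
  -- Step 3: Multipliability of g
  have hB : Multipliable g := by
    have hgne : ∀ n, g n ≠ 0 := fun n =>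
      div_ne_zero (hnez n) (hnez' n)
    apply Complex.multipliable_of_summable_log
    -- bound on g n - 1
    have hbound : ∀ n : ℕ, ‖g n - 1‖ ≤ (2 * q / (1 - q)) * q ^ n := by
      intro n
      have hrw : g n - 1 = ((q:ℂ) ^ (z + (n:ℂ) + 1) - (q:ℂ) ^ (n+1)) /
          (1 - (q:ℂ) ^ (z + (n:ℂ) + 1)) := by
        rw [hg_def, div_sub_one (hnez' n)]
        congr 1
        ring
      rw [hrw, norm_div]
      have habs1 : ‖(q:ℂ) ^ (z + (n:ℂ) + 1)‖ ≤ q ^ (n+1) := by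
        rw [habs]
        have h2 : ((n:ℝ) + 1 : ℝ) ≤ (z + (n:ℂ) + 1).re := by
          simp only [Complex.add_re, Complex.natCast_re, Complex.one_re]
          linarith
        calc q ^ (z + (n:ℂ) + 1).re ≤ q ^ ((n:ℝ) + 1) :=
            Real.rpow_le_rpow_of_exponent_ge hq hq1.le h2
          _ = q ^ (n + 1) := by
            rw [← Real.rpow_natCast q (n+1)]; push_cast; ring_nf
      have hnum : ‖(q:ℂ) ^ (z + (n:ℂ) + 1) - (q:ℂ) ^ (n+1)‖ ≤ 2 * q ^ (n+1) := by
        calc ‖(q:ℂ) ^ (z + (n:ℂ) + 1) - (q:ℂ) ^ (n+1)‖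
            ≤ ‖(q:ℂ) ^ (z + (n:ℂ) + 1)‖ + ‖(q:ℂ) ^ ((n+1 : ℕ))‖ := norm_sub_le _ _
          _ ≤ q ^ (n+1) + q ^ (n+1) := by
              apply add_le_add habs1
              rw [← Complex.ofReal_pow]
              simp [Complex.norm_real, abs_of_pos (pow_pos hq (n+1)),
                abs_of_pos hq]
          _ = 2 * q ^ (n+1) := by ring
      have hden : 1 - q ≤ ‖1 - (q:ℂ) ^ (z + (n:ℂ) + 1)‖ := by
        have h1 : ‖(1:ℂ)‖ - ‖(q:ℂ) ^ (z + (n:ℂ) + 1)‖ ≤ ‖1 - (q:ℂ) ^ (z + (n:ℂ) + 1)‖ :=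
          norm_sub_norm_le 1 _
        have h3 : q ^ (n+1) ≤ q := by
          calc q ^ (n+1) ≤ q ^ 1 := pow_le_pow_of_le_one hq0 hq1.le (by omega)
            _ = q := pow_one q
        simp only [norm_one] at h1
        have := habs1
        refine le_trans ?_ h1
        linarith
      calc ‖(q:ℂ) ^ (z + (n:ℂ) + 1) - (q:ℂ) ^ (n+1)‖ / ‖1 - (q:ℂ) ^ (z + (n:ℂ) + 1)‖
          ≤ (2 * q ^ (n+1)) / (1 - q) := by
            apply div_le_div₀ (by positivity) hnum h1q hden
        _ = (2 * q / (1 - q)) * q ^ n := by field_simp; ring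
    -- eventual smallness
    have hev : ∀ᶠ n in atTop, ‖Complex.log (g n)‖ ≤ (3/2) * ((2 * q / (1 - q)) * q ^ n) := by
      have hto : Tendsto (fun n : ℕ => (2 * q / (1 - q)) * q ^ n) atTop (𝓝 0) := by
        have := (tendsto_pow_atTop_nhds_zero_of_lt_one hq0 hq1).const_mul (2 * q / (1 - q))
        simpa using this
      filter_upwards [hto.eventually_le_const (by norm_num : (0:ℝ) < 1/2)] with n hn
      have hsmall : ‖g n - 1‖ ≤ 1/2 := le_trans (hbound n) hn
      have : Complex.log (g n) = Complex.log (1 + (g n - 1)) := by ring_nf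
      rw [this]
      calc ‖Complex.log (1 + (g n - 1))‖ ≤ (3/2) * ‖g n - 1‖ :=
          Complex.norm_log_one_add_half_le_self hsmall
        _ ≤ (3/2) * ((2 * q / (1 - q)) * q ^ n) := by
            have := hbound n; nlinarith
    apply Summable.of_norm_bounded_eventually_nat (g := fun n => (3/2) * ((2 * q / (1 - q)) * q ^ n))
    · exact ((summable_geometric_of_lt_one hq0 hq1).mul_left _).mul_left _
    · exact hev
  -- conclude
  have : (∏' n : ℕ, ((qnum q ((n : ℂ) + 2) / qnum q ((n : ℂ) + 1)) ^ z *
          (qnum q (z + n + 1) / qnum q ((n : ℂ) + 1))⁻¹))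
      = ∏' n, f n * g n := tprod_congr key
  rw [this, (hA.mul hB.hasProd).tprod_eq]
  rfl
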